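/- Let P be a probability measure on Ω and let Q be a probability measure on Ω which is invariant with respect to the point of view of the particle, equivalent to the translation-invariant i.i.d. measure P, with Radon–Nikodym derivative f = dQ/dP. Then for P-almost every ω ∈ Ω, for every n ∈ ℕ and every x ∈ ℤ^d, f(σ_x ω) = Σ_{y∈ℤ^d} P_ω^y(X_n = x) · f(σ_y ω). -/

import Mathlib

open MeasureTheory Filter
open scoped ENNReal

noncomputable section

namespace RWRE

/-- sites of the lattice `ℤ^d`. -/
abbrev Site (d : ℕ) := Fin d → ℤ

/-- index set for the `2d` nearest-neighbour steps: `(i, true) ↦ e_i`, `(i, false) ↦ -e_i`. -/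
abbrev StepIdx (d : ℕ) := Fin d × Bool

/-- the signed unit vector corresponding to a step index. -/
def stepVec {d : ℕ} (s : StepIdx d) : Site d :=
  fun j => if j = s.1 then (if s.2 then 1 else -1) else 0

/-- probability vectors on the `2d` nearest-neighbour steps. -/
abbrev EnvAt (d : ℕ) := {p : StepIdx d → ℝ // (∀ s, 0 ≤ p s) ∧ ∑ s, p s = 1}

/-- the space of environments `Ω = (M_d)^{ℤ^d}`. -/
abbrev Env (d : ℕ) := Site d → EnvAt d

/-- the space of trajectories. -/
abbrev Path (d : ℕ) := ℕ → Site d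

/-- the shift of the environment by `x`. -/
def shift {d : ℕ} (x : Site d) (ω : Env d) : Env d := fun y => ω (x + y)

/-- transition probability in environment `ω` from site `y` by increment `v`. -/
def envP {d : ℕ} (ω : Env d) (y v : Site d) : ℝ≥0∞ :=
  ∑ s : StepIdx d, if v = stepVec s then ENNReal.ofReal ((ω y).1 s) else 0

/-- `μ` is the quenched law of the walk started at `x` in the environment `ω`: a
probability measure on path space whose cylinder probabilities are the products of
the transition probabilities of `ω`. -/
def IsQuenched {d : ℕ} (ω : Env d) (x : Site d) (μ : Measure (Path d)) : Prop :=
  IsProbabilityMeasure μ ∧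
    ∀ (n : ℕ) (γ : ℕ → Site d),
      μ {f | ∀ i ≤ n, f i = γ i} =
        (if γ 0 = x then 1 else 0) *
          ∏ i ∈ Finset.range n, envP ω (γ i) (γ (i + 1) - γ i)

/-- `Pq` is a measurable family of quenched laws. -/
def IsQuenchedFamily {d : ℕ} (Pq : Env d → Site d → Measure (Path d)) : Prop :=
  (∀ ω x, IsQuenched ω x (Pq ω x)) ∧
    ∀ (x : Site d) (A : Set (Path d)), MeasurableSet A →
      Measurable fun ω => Pq ω x A

/-- the annealed probability `ℙ^x(A) = ∫ P_ω^x(A) dP(ω)` of a path event. -/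
def ann {d : ℕ} (P : Measure (Env d)) (Pq : Env d → Site d → Measure (Path d))
    (x : Site d) (A : Set (Path d)) : ℝ≥0∞ :=
  ∫⁻ ω, Pq ω x A ∂P

/-- the annealed expectation `𝔼^x[g]` of a real path functional. -/
def annE {d : ℕ} (P : Measure (Env d)) (Pq : Env d → Site d → Measure (Path d))
    (x : Site d) (g : Path d → ℝ) : ℝ :=
  ∫ ω, (∫ f, g f ∂(Pq ω x)) ∂P

/-- `P` is an i.i.d. measure on the space of environments: its finite-dimensional
marginals are products of a fixed single-site probability measure. -/
def IsIID {d : ℕ} (P : Measure (Env d)) : Prop :=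
  ∃ ν : Measure (EnvAt d), IsProbabilityMeasure ν ∧
    ∀ (s : Finset (Site d)) (B : Site d → Set (EnvAt d)),
      (∀ x, MeasurableSet (B x)) →
        P {ω | ∀ x ∈ s, ω x ∈ B x} = ∏ x ∈ s, ν (B x)

/-- uniform ellipticity of `P`. -/
def UniformlyElliptic {d : ℕ} (P : Measure (Env d)) : Prop :=
  ∃ η : ℝ, 0 < η ∧ ∀ s : StepIdx d, P {ω : Env d | (ω 0).1 s < η} = 0

/-- a lattice point, viewed as a real vector. -/
def toR {d : ℕ} (x : Site d) : Fin d → ℝ := fun i => (x i : ℝ)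

/-- inner product of a lattice point with a real direction. -/
def dotR {d : ℕ} (x : Site d) (ℓ : Fin d → ℝ) : ℝ := ∑ i, (x i : ℝ) * ℓ i

/-- the euclidean norm of a real vector. -/
def norm2R {d : ℕ} (ℓ : Fin d → ℝ) : ℝ := Real.sqrt (∑ i, ℓ i ^ 2)

/-- the event `{T_L^{(-ℓ)} < T_L^{(ℓ)}}` that the walk reaches level `L` in
direction `-ℓ` strictly before reaching level `L` in direction `ℓ`. -/
def backtrackEvent {d : ℕ} (ℓ : Fin d → ℝ) (L : ℝ) : Set (Path d) :=
  {f | ∃ n, L ≤ dotR (f n) (-ℓ) ∧ ∀ m ≤ n, dotR (f m) ℓ < L}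

/-- condition `(T_γ)` in the direction `ℓ₀`. -/
def CondTAt {d : ℕ} (P : Measure (Env d)) (Pq : Env d → Site d → Measure (Path d))
    (γ : ℝ) (ℓ₀ : Fin d → ℝ) : Prop :=
  ∃ ε : ℝ, 0 < ε ∧ ∀ ℓ : Fin d → ℝ, norm2R ℓ = 1 → norm2R (ℓ - ℓ₀) < ε →
    ∃ C : ℝ, ∀ L : ℝ, 0 < L →
      ann P Pq 0 (backtrackEvent ℓ L) ≤ ENNReal.ofReal (C * Real.exp (-(L ^ γ)))

/-- condition `(T_γ)` in some direction. -/
def CondT {d : ℕ} (P : Measure (Env d)) (Pq : Env d → Site d → Measure (Path d))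
    (γ : ℝ) : Prop :=
  ∃ ℓ₀ : Fin d → ℝ, norm2R ℓ₀ = 1 ∧ CondTAt P Pq γ ℓ₀

/-- condition `(𝒫)`: condition `(T_γ)` holds for some `γ ∈ (0,1)` in some direction. -/
def CondP {d : ℕ} (P : Measure (Env d)) (Pq : Env d → Site d → Measure (Path d)) : Prop :=
  ∃ γ : ℝ, 0 < γ ∧ γ < 1 ∧ CondT P Pq γ

/-- condition `(𝒫)` in a given direction. -/
def CondPAt {d : ℕ} (P : Measure (Env d)) (Pq : Env d → Site d → Measure (Path d))
    (ℓ₀ : Fin d → ℝ) : Prop :=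
  ∃ γ : ℝ, 0 < γ ∧ γ < 1 ∧ CondTAt P Pq γ ℓ₀

/-- `Q` is invariant with respect to the point of view of the particle. -/
def InvariantPOV {d : ℕ} (Q : Measure (Env d)) : Prop :=
  ∀ g : Env d → ℝ, Measurable g → (∃ C : ℝ, ∀ ω, |g ω| ≤ C) →
    ∫ ω, (∑ s : StepIdx d, (ω 0).1 s * g (shift (stepVec s) ω)) ∂Q = ∫ ω, g ω ∂Q

/-- superpolynomial decay: `g N = N^{-ξ(1)}`. -/
def Superpoly (g : ℕ → ℝ) : Prop :=
  ∀ k : ℕ, Tendsto (fun N : ℕ => (N : ℝ) ^ k * g N) atTop (nhds 0)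

/-- the first coordinate `⟨x, e₁⟩` of a lattice point. -/
def firstCoord {d : ℕ} (x : Fin d → ℤ) : ℤ := if h : 0 < d then x ⟨0, h⟩ else 0

/-- the first coordinate `⟨ℓ, e₁⟩` of a real vector. -/
def firstCoordR {d : ℕ} (ℓ : Fin d → ℝ) : ℝ := if h : 0 < d then ℓ ⟨0, h⟩ else 0

/-- the first standard basis vector, as a real direction. -/
def e1R (d : ℕ) : Fin d → ℝ := fun i => if (i : ℕ) = 0 then 1 else 0

/-- `R_k(N) = ⌊exp((log log N)^{k+1})⌋`. -/
def Rk (k N : ℕ) : ℕ := ⌊Real.exp (Real.log (Real.log (N : ℝ)) ^ (k + 1))⌋₊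

/-- the `ℓ¹`-norm of a lattice point. -/
def norm1 {d : ℕ} (x : Site d) : ℤ := ∑ i, |x i|

/-- the parallelogram `𝒫(z,N)` (relative to the asymptotic direction `ϑ`). -/
def para {d : ℕ} (ϑ : Fin d → ℝ) (z : Site d) (N : ℕ) : Set (Site d) :=
  {x | |firstCoord (x - z)| < (N : ℤ) ^ 2 ∧
    ∀ i, |((x - z) i : ℝ) - (firstCoord (x - z) : ℝ) / firstCoordR ϑ * ϑ i|
      < (N : ℝ) * (Rk 5 N : ℝ)}

/-- the middle third `𝒫̃(z,N)` of the parallelogram. -/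
def paraMid {d : ℕ} (ϑ : Fin d → ℝ) (z : Site d) (N : ℕ) : Set (Site d) :=
  {x | 3 * |firstCoord (x - z)| < (N : ℤ) ^ 2 ∧
    ∀ i, 3 * |((x - z) i : ℝ) - (firstCoord (x - z) : ℝ) / firstCoordR ϑ * ϑ i|
      < (N : ℝ) * (Rk 5 N : ℝ)}

/-- the boundary `∂𝒫(z,N)`. -/
def paraBdry {d : ℕ} (ϑ : Fin d → ℝ) (z : Site d) (N : ℕ) : Set (Site d) :=
  {x | x ∉ para ϑ z N ∧ ∃ y ∈ para ϑ z N, norm1 (x - y) = 1}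

/-- the right boundary `∂⁺𝒫(z,N)`. -/
def paraBdryPlus {d : ℕ} (ϑ : Fin d → ℝ) (z : Site d) (N : ℕ) : Set (Site d) :=
  {x | x ∈ paraBdry ϑ z N ∧ firstCoord (x - z) = (N : ℤ) ^ 2}

/-- the walk hits the set `A`. -/
def hits {d : ℕ} (A : Set (Site d)) (f : Path d) : Prop := ∃ n, f n ∈ A

/-- the hitting time `T_A` of a set of sites. -/
def hitTime {d : ℕ} (A : Set (Site d)) (f : Path d) : ℕ := sInf {n | f n ∈ A}

/-- the hyperplane `H_M = {x : ⟨x,e₁⟩ = M}`. -/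
def hyper {d : ℕ} (M : ℤ) : Set (Site d) := {x | firstCoord x = M}

/-- the event that the walk hits `A`, at a time belonging to `I`, and in a point of `Δ`. -/
def exitEvent {d : ℕ} (A Δ : Set (Site d)) (I : Set ℕ) : Set (Path d) :=
  {f | hits A f ∧ f (hitTime A f) ∈ Δ ∧ hitTime A f ∈ I}

/-- the `d`-dimensional cube with corner `a` and side length `L`. -/
def cube {d : ℕ} (a : Site d) (L : ℕ) : Set (Site d) :=
  {x | ∀ i, a i ≤ x i ∧ x i < a i + (L : ℤ)}

/-- the same cube, as a finite set. -/
def cubeF {d : ℕ} (a : Site d) (L : ℕ) : Finset (Site d) :=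
  Fintype.piFinset fun i => Finset.Ico (a i) (a i + (L : ℤ))

/-- a `(d-1)`-dimensional cube of side length `L` inside the hyperplane `H_m`. -/
def cubeHyp {d : ℕ} (m : ℤ) (a : Site d) (L : ℕ) : Set (Site d) :=
  {x | firstCoord x = m ∧ ∀ i : Fin d, (i : ℕ) ≠ 0 → a i ≤ x i ∧ x i < a i + (L : ℤ)}

/-- the time interval `[t, t + L)`. -/
def interval (t L : ℕ) : Set ℕ := {n | t ≤ n ∧ n < t + L}

/-- `S` is the set of corners of a partition of `ℤ^d` into cubes of side length `L`. -/
def IsCubePartition {d : ℕ} (L : ℕ) (S : Set (Site d)) : Prop :=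
  (∀ x : Site d, ∃ a ∈ S, x ∈ cube a L) ∧
    ∀ a ∈ S, ∀ b ∈ S, a ≠ b → Disjoint (cube a L) (cube b L)

/-- `t` is a regeneration time of the path `f` in direction `e₁`. -/
def IsRegen {d : ℕ} (f : Path d) (t : ℕ) : Prop :=
  (∀ s < t, firstCoord (f s) < firstCoord (f t)) ∧
    firstCoord (f t) < firstCoord (f (t + 1)) ∧
    ∀ s, t + 1 < s → firstCoord (f (t + 1)) < firstCoord (f s)

/-- the `k`-th regeneration time `τ_k` (with the convention `τ₀ = 0`). -/
def regTime {d : ℕ} (f : Path d) : ℕ → ℕ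
  | 0 => 0
  | k + 1 => sInf {t | regTime f k < t ∧ IsRegen f t}

/-- the event `B_N` that each of the first `N²` regeneration gaps is at most `R(N)`. -/
def BN {d : ℕ} (N : ℕ) : Set (Path d) :=
  {f | ∀ k, 1 ≤ k → k ≤ N ^ 2 → regTime f k - regTime f (k - 1) ≤ Rk 1 N}

/-- `ϑ` is the asymptotic direction `lim Xₙ/‖Xₙ‖₂` of the walk, annealed a.s. -/
def DirSpeed {d : ℕ} (P : Measure (Env d)) (Pq : Env d → Site d → Measure (Path d))
    (ϑ : Fin d → ℝ) : Prop :=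
  ann P Pq 0 {f | ¬ Tendsto (fun n => fun i => toR (f n) i / norm2R (toR (f n)))
    atTop (nhds ϑ)} = 0

/-- the σ-algebra generated by the environment in the half space `⟨z,e₁⟩ ≤ m`. -/
def sigmaUpTo (d : ℕ) (m : ℤ) : MeasurableSpace (Env d) :=
  MeasurableSpace.comap
    (fun ω => (fun z : {z : Site d // firstCoord z ≤ m} => ω z.1)) inferInstance
section Aux

variable {d : ℕ}

/-! ### Basic facts about the shift -/

lemma measurable_shift (x : Site d) : Measurable (shift (d := d) x) :=
  measurable_pi_lambda _ fun y => measurable_pi_apply (x + y)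

lemma shift_apply (x : Site d) (ω : Env d) (y : Site d) : shift x ω y = ω (x + y) := rfl

lemma shift_shift (a b : Site d) (ω : Env d) : shift a (shift b ω) = shift (b + a) ω := by
  funext y; simp [shift, add_assoc]

lemma shift_zero (ω : Env d) : shift (0 : Site d) ω = ω := by
  funext y; simp [shift]

/-! ### Shift invariance of an i.i.d. measure -/

lemma map_shift_eq {P : Measure (Env d)} [IsProbabilityMeasure P]
    (hIID : IsIID P) (v : Site d) : P.map (shift v) = P := by
  obtain ⟨ν, hν, hP⟩ := hIID
  have hmeasshift := measurable_shift (d := d) v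
  haveI : IsProbabilityMeasure (P.map (shift v)) :=
    Measure.isProbabilityMeasure_map hmeasshift.aemeasurable
  refine ext_of_generate_finite _ generateFrom_squareCylinders.symm
    (isPiSystem_squareCylinders (fun _ => MeasurableSpace.isPiSystem_measurableSet) (fun _ => by simp))
    ?_ ?_
  · rintro S ⟨s, t, ht, rfl⟩
    have hmeas : ∀ x, MeasurableSet (t x) := fun x => ht x (Set.mem_univ x)
    have hpre : (shift v) ⁻¹' ((s : Set (Site d)).pi t)
        = {ω : Env d | ∀ x ∈ s.image (fun z => v + z), ω x ∈ t (x - v)} := by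
      ext ω
      simp only [Set.mem_preimage, Set.mem_pi, Set.mem_setOf_eq, Finset.mem_image,
        Finset.mem_coe]
      constructor
      · rintro h x ⟨z, hz, rfl⟩
        rw [add_sub_cancel_left]
        exact h z hz
      · intro h z hz
        have := h (v + z) ⟨z, hz, rfl⟩
        rw [add_sub_cancel_left] at this
        exact this
    have hset : (s : Set (Site d)).pi t = {ω : Env d | ∀ x ∈ s, ω x ∈ t x} := by
      ext ω; simp [Set.mem_pi]
    rw [Measure.map_apply hmeasshift
      (MeasurableSet.pi (Finset.countable_toSet _) (fun x _ => hmeas x)),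
      hpre, hset, hP s t hmeas, hP _ _ (fun x => hmeas (x - v)),
      Finset.prod_image (fun a _ b _ h => by simpa using congrArg (fun w => w - v) h)]
    exact Finset.prod_congr rfl fun x _ => by rw [add_sub_cancel_left]
  · simp

end Aux

section OneStep

variable {d : ℕ} {P Q : Measure (Env d)}

lemma measurable_prob (s : StepIdx d) (z : Site d) :
    Measurable fun ω : Env d => (ω z).1 s :=
  (measurable_pi_apply s).comp (measurable_subtype_coe.comp (measurable_pi_apply z))

lemma prob_nonneg (ω : Env d) (z : Site d) (s : StepIdx d) : 0 ≤ (ω z).1 s := (ω z).2.1 s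

lemma sum_prob (ω : Env d) (z : Site d) : ∑ s, (ω z).1 s = 1 := (ω z).2.2

lemma onestep [IsProbabilityMeasure P] [IsProbabilityMeasure Q]
    (hIID : IsIID P) (hQinv : InvariantPOV Q) (hQP : Q ≪ P) :
    (fun ω => ∑ s : StepIdx d, ENNReal.ofReal ((ω (-stepVec s)).1 s)
        * Q.rnDeriv P (shift (-stepVec s) ω)) =ᵐ[P] Q.rnDeriv P := by
  classical
  set f := Q.rnDeriv P with hf
  have hfm : Measurable f := Measure.measurable_rnDeriv Q P
  set G : Env d → ℝ≥0∞ := fun ω => ∑ s : StepIdx d,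
      ENNReal.ofReal ((ω (-stepVec s)).1 s) * f (shift (-stepVec s) ω) with hG
  have hGm : Measurable G :=
    Finset.measurable_sum _ fun s _ =>
      ((ENNReal.measurable_ofReal.comp (measurable_prob s _)).mul
        (hfm.comp (measurable_shift _)))
  refine ae_eq_of_forall_setLIntegral_eq_of_sigmaFinite hGm hfm fun A hA _ => ?_
  -- test function: the indicator of `A`
  set g : Env d → ℝ := A.indicator 1 with hgdef
  have hg : Measurable g := measurable_one.indicator hA
  have hg01 : ∀ ω, g ω = 0 ∨ g ω = 1 := by
    intro ω; by_cases h : ω ∈ A <;> simp [hgdef, Set.indicator_apply, h]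
  have hgb : ∃ C : ℝ, ∀ ω, |g ω| ≤ C := ⟨1, fun ω => by rcases hg01 ω with h | h <;> simp [h]⟩
  have hinv := hQinv g hg hgb
  set ind : Env d → ℝ≥0∞ := A.indicator 1 with hinddef
  have hindm : Measurable ind := measurable_one.indicator hA
  have hofg : ∀ ω, ENNReal.ofReal (g ω) = ind ω := by
    intro ω; by_cases h : ω ∈ A <;> simp [hgdef, hinddef, Set.indicator_apply, h]
  set H : Env d → ℝ := fun ω => ∑ s : StepIdx d, (ω 0).1 s * g (shift (stepVec s) ω) with hH
  have hH0 : ∀ ω, 0 ≤ H ω := fun ω =>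
    Finset.sum_nonneg fun s _ => mul_nonneg (prob_nonneg ω 0 s)
      (by rcases hg01 (shift (stepVec s) ω) with h | h <;> simp [h])
  have hHm : Measurable H :=
    Finset.measurable_sum _ fun s _ =>
      (measurable_prob s 0).mul (hg.comp (measurable_shift _))
  set φ : Env d → ℝ≥0∞ := fun ω => ∑ s : StepIdx d,
      ENNReal.ofReal ((ω 0).1 s) * ind (shift (stepVec s) ω) with hφ
  have hφm : ∀ s : StepIdx d, Measurable fun ω : Env d =>
      ENNReal.ofReal ((ω 0).1 s) * ind (shift (stepVec s) ω) := fun s =>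
    (ENNReal.measurable_ofReal.comp (measurable_prob s 0)).mul
      (hindm.comp (measurable_shift _))
  have hofH : ∀ ω, ENNReal.ofReal (H ω) = φ ω := by
    intro ω
    rw [hH, ENNReal.ofReal_sum_of_nonneg fun s _ => mul_nonneg (prob_nonneg ω 0 s)
      (by rcases hg01 (shift (stepVec s) ω) with h | h <;> simp [h])]
    exact Finset.sum_congr rfl fun s _ => by
      rw [ENNReal.ofReal_mul (prob_nonneg ω 0 s), hofg]
  -- the invariance identity, in `ℝ≥0∞` form
  have hint1 : ∫ ω, H ω ∂Q = (∫⁻ ω, φ ω ∂Q).toReal := by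
    rw [integral_eq_lintegral_of_nonneg_ae (ae_of_all _ hH0) hHm.aestronglyMeasurable]
    congr 1
    exact lintegral_congr hofH
  have hφle : ∀ ω, φ ω ≤ 1 := by
    intro ω
    calc φ ω ≤ ∑ s : StepIdx d, ENNReal.ofReal ((ω 0).1 s) * 1 := by
          refine Finset.sum_le_sum fun s _ => mul_le_mul' le_rfl ?_
          by_cases h : shift (stepVec s) ω ∈ A <;> simp [hinddef, Set.indicator_apply, h]
      _ = ENNReal.ofReal (∑ s : StepIdx d, (ω 0).1 s) := by
          rw [ENNReal.ofReal_sum_of_nonneg fun s _ => prob_nonneg ω 0 s]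
          simp
      _ = 1 := by rw [sum_prob]; simp
  have hφfin : ∫⁻ ω, φ ω ∂Q ≠ ⊤ := by
    refine ne_of_lt (lt_of_le_of_lt (le_trans (lintegral_mono hφle) ?_) ENNReal.one_lt_top)
    simp
  have hint2 : ∫ ω, g ω ∂Q = (Q A).toReal := by
    rw [hgdef]; exact integral_indicator_one hA
  have hkey : ∫⁻ ω, φ ω ∂Q = Q A := by
    have := hinv
    rw [hint1, hint2] at this
    exact (ENNReal.toReal_eq_toReal_iff' hφfin (measure_ne_top Q A)).mp this
  -- transfer the left side to `P` and change variables by the shift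
  have hstep : ∀ s : StepIdx d,
      ∫⁻ ω, ENNReal.ofReal ((ω 0).1 s) * ind (shift (stepVec s) ω) ∂Q
        = ∫⁻ ω, (ENNReal.ofReal ((ω (-stepVec s)).1 s) * f (shift (-stepVec s) ω)) * ind ω ∂P := by
    intro s
    rw [← lintegral_rnDeriv_mul hQP (hφm s).aemeasurable]
    have hFm : Measurable fun ω : Env d =>
        (ENNReal.ofReal ((ω (-stepVec s)).1 s) * f (shift (-stepVec s) ω)) * ind ω :=
      ((ENNReal.measurable_ofReal.comp (measurable_prob s _)).mul
        (hfm.comp (measurable_shift _))).mul hindm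
    conv_rhs => rw [← map_shift_eq hIID (stepVec s)]
    rw [lintegral_map hFm (measurable_shift _)]
    refine lintegral_congr fun ω => ?_
    have h1 : shift (-stepVec s) (shift (stepVec s) ω) = ω := by
      rw [shift_shift, add_neg_cancel, shift_zero]
    have h2 : (shift (stepVec s) ω) (-stepVec s) = ω 0 := by
      rw [shift_apply, add_neg_cancel]
    rw [h1, h2]; ring
  have hsum : ∫⁻ ω, φ ω ∂Q = ∫⁻ ω in A, G ω ∂P := by
    rw [hφ]
    rw [lintegral_finset_sum _ fun s _ => hφm s]
    have : ∀ s : StepIdx d, s ∈ (Finset.univ : Finset (StepIdx d)) →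
        ∫⁻ ω, ENNReal.ofReal ((ω 0).1 s) * ind (shift (stepVec s) ω) ∂Q
          = ∫⁻ ω, (ENNReal.ofReal ((ω (-stepVec s)).1 s) * f (shift (-stepVec s) ω)) * ind ω ∂P :=
      fun s _ => hstep s
    rw [Finset.sum_congr rfl this,
      ← lintegral_finset_sum (μ := P) Finset.univ
        (f := fun (s : StepIdx d) (ω : Env d) =>
          (ENNReal.ofReal ((ω (-stepVec s)).1 s) * f (shift (-stepVec s) ω)) * ind ω)
        (fun s _ =>
        ((ENNReal.measurable_ofReal.comp (measurable_prob s _)).mul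
          (hfm.comp (measurable_shift _))).mul hindm)]
    have hpt : ∀ ω, (∑ s : StepIdx d,
        (ENNReal.ofReal ((ω (-stepVec s)).1 s) * f (shift (-stepVec s) ω)) * ind ω)
          = A.indicator G ω := by
      intro ω
      rw [← Finset.sum_mul]
      by_cases h : ω ∈ A <;>
        simp [hinddef, hG, Set.indicator_apply, h]
    rw [lintegral_congr hpt, lintegral_indicator hA]
  rw [← hsum, hkey]
  exact (Measure.setLIntegral_rnDeriv' hQP hA).symm

end OneStep

section Cylinders

variable {d : ℕ}

/-- the path following `b` for the first `n` steps and sitting at `x` from time `n` on. -/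
def pathOf {n : ℕ} (b : Fin n → Site d) (x : Site d) : Path d :=
  fun i => if h : i < n then b ⟨i, h⟩ else x

/-- the weight of the initial segment of a path. -/
def wt (ω : Env d) (y : Site d) (n : ℕ) (c : Path d) : ℝ≥0∞ :=
  (if c 0 = y then 1 else 0) * ∏ i ∈ Finset.range n, envP ω (c i) (c (i + 1) - c i)

lemma measurableSet_cyl (n : ℕ) (γ : ℕ → Site d) :
    MeasurableSet {p : Path d | ∀ i ≤ n, p i = γ i} := by
  have h : {p : Path d | ∀ i ≤ n, p i = γ i}
      = ⋂ i ∈ Set.Iic n, (fun p : Path d => p i) ⁻¹' {γ i} := by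
    ext p; simp [Set.mem_Iic]
  rw [h]
  exact MeasurableSet.biInter (Set.to_countable _) fun i _ =>
    (measurable_pi_apply i) (measurableSet_singleton _)

lemma quenched_eq_tsum {ω : Env d} {y : Site d} {μ : Measure (Path d)}
    (hμ : IsQuenched ω y μ) (n : ℕ) (x : Site d) :
    μ {p : Path d | p n = x} = ∑' b : Fin n → Site d, wt ω y n (pathOf b x) := by
  have hdec : {p : Path d | p n = x}
      = ⋃ b : Fin n → Site d, {p : Path d | ∀ i ≤ n, p i = pathOf b x i} := by
    ext p
    simp only [Set.mem_setOf_eq, Set.mem_iUnion]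
    constructor
    · intro h
      refine ⟨fun i => p i.1, fun i hi => ?_⟩
      unfold pathOf
      rcases lt_or_eq_of_le hi with h' | h'
      · rw [dif_pos h']
      · rw [dif_neg (by omega)]
        rw [h']; exact h
    · rintro ⟨b, hb⟩
      have h := hb n le_rfl
      rw [h]; unfold pathOf; rw [dif_neg (lt_irrefl n)]
  rw [hdec, measure_iUnion ?_ (fun b => measurableSet_cyl n _)]
  · exact tsum_congr fun b => hμ.2 n (pathOf b x)
  · intro b b' hbb'
    rw [Function.onFun, Set.disjoint_left]
    intro p hp hp'
    apply hbb'
    funext i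
    have h1 := hp i.1 (le_of_lt i.2)
    have h2 := hp' i.1 (le_of_lt i.2)
    unfold pathOf at h1 h2
    rw [dif_pos i.2] at h1 h2
    rw [← Fin.eta i i.2, ← h1, ← h2]

lemma quenched_zero {ω : Env d} {y : Site d} {μ : Measure (Path d)}
    (hμ : IsQuenched ω y μ) (x : Site d) :
    μ {p : Path d | p 0 = x} = if x = y then 1 else 0 := by
  rw [quenched_eq_tsum hμ 0 x]
  rw [tsum_eq_single (fun i => i.elim0) fun b hb => absurd (Subsingleton.elim b _) hb]
  unfold wt pathOf
  simp

lemma wt_snoc (ω : Env d) (y : Site d) (n : ℕ) (b : Fin n → Site d) (z x : Site d) :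
    wt ω y (n + 1) (pathOf (Fin.snoc b z) x)
      = wt ω y n (pathOf b z) * envP ω z (x - z) := by
  have hle : ∀ i ≤ n, pathOf (Fin.snoc b z) x i = pathOf b z i := by
    intro i hi
    unfold pathOf
    rcases lt_or_eq_of_le hi with h | h
    · rw [dif_pos (by omega : i < n + 1), dif_pos h]
      have he : (⟨i, by omega⟩ : Fin (n + 1)) = Fin.castSucc ⟨i, h⟩ := rfl
      rw [he, Fin.snoc_castSucc]
    · subst h
      rw [dif_pos (by omega : i < i + 1), dif_neg (lt_irrefl i)]
      have he : (⟨i, by omega⟩ : Fin (i + 1)) = Fin.last i := rfl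
      rw [he, Fin.snoc_last]
  have hn1 : pathOf (Fin.snoc b z) x (n + 1) = x := by
    unfold pathOf; rw [dif_neg (lt_irrefl _)]
  have hn : pathOf b z n = z := by
    unfold pathOf; rw [dif_neg (lt_irrefl _)]
  unfold wt
  rw [Finset.prod_range_succ, hn1, hle n le_rfl, hn, hle 0 (Nat.zero_le n)]
  have hprod : ∏ i ∈ Finset.range n,
      envP ω (pathOf (Fin.snoc b z) x i)
        (pathOf (Fin.snoc b z) x (i + 1) - pathOf (Fin.snoc b z) x i)
      = ∏ i ∈ Finset.range n, envP ω (pathOf b z i) (pathOf b z (i + 1) - pathOf b z i) :=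
    Finset.prod_congr rfl fun i hi => by
      have him := Finset.mem_range.mp hi
      rw [hle i (by omega), hle (i + 1) (by omega)]
  rw [hprod]
  ring

/-- the split of a tuple of length `n+1` into its last entry and the rest. -/
def snocEquiv (n : ℕ) : (Site d × (Fin n → Site d)) ≃ (Fin (n + 1) → Site d) where
  toFun p := Fin.snoc p.2 p.1
  invFun c := (c (Fin.last n), fun i => c i.castSucc)
  left_inv p := by
    ext
    · simp
    · simp
  right_inv c := Fin.snoc_init_self c

lemma quenched_succ {ω : Env d} {y : Site d}
    {μ : ℕ → Measure (Path d)} (hμ : ∀ m, IsQuenched ω y (μ m)) (n : ℕ) (x : Site d) :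
    μ (n + 1) {p : Path d | p (n + 1) = x}
      = ∑' z : Site d, μ n {p : Path d | p n = z} * envP ω z (x - z) := by
  rw [quenched_eq_tsum (hμ (n + 1)) (n + 1) x,
    ← Equiv.tsum_eq (snocEquiv (d := d) n) (fun c => wt ω y (n + 1) (pathOf c x))]
  rw [ENNReal.tsum_prod']
  refine tsum_congr fun z => ?_
  have h1 : ∀ b : Fin n → Site d,
      wt ω y (n + 1) (pathOf ((snocEquiv (d := d) n) (z, b)) x)
        = wt ω y n (pathOf b z) * envP ω z (x - z) := fun b => wt_snoc ω y n b z x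
  rw [tsum_congr h1, ENNReal.tsum_mul_right, quenched_eq_tsum (hμ n) n z]

end Cylinders

section AllX

variable {d : ℕ} {P Q : Measure (Env d)}

lemma onestep_all [IsProbabilityMeasure P] [IsProbabilityMeasure Q]
    (hIID : IsIID P) (hQinv : InvariantPOV Q) (hQP : Q ≪ P) :
    ∀ᵐ ω ∂P, ∀ x : Site d,
      (∑ s : StepIdx d, ENNReal.ofReal ((ω (x - stepVec s)).1 s)
        * Q.rnDeriv P (shift (x - stepVec s) ω)) = Q.rnDeriv P (shift x ω) := by
  have hfm : Measurable (Q.rnDeriv P) := Measure.measurable_rnDeriv Q P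
  have hGm : Measurable (fun ω : Env d => ∑ s : StepIdx d,
      ENNReal.ofReal ((ω (-stepVec s)).1 s) * Q.rnDeriv P (shift (-stepVec s) ω)) :=
    Finset.measurable_sum _ fun s _ =>
      ((ENNReal.measurable_ofReal.comp (measurable_prob s _)).mul
        (hfm.comp (measurable_shift _)))
  have h0 := onestep hIID hQinv hQP
  rw [ae_all_iff]
  intro x
  have hmap := map_shift_eq hIID x
  have h1 : ∀ᵐ ω ∂P,
      (∑ s : StepIdx d, ENNReal.ofReal (((shift x ω) (-stepVec s)).1 s)
        * Q.rnDeriv P (shift (-stepVec s) (shift x ω))) = Q.rnDeriv P (shift x ω) := by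
    have h0' : ∀ᵐ ω' ∂(P.map (shift x)),
        (∑ s : StepIdx d, ENNReal.ofReal ((ω' (-stepVec s)).1 s)
          * Q.rnDeriv P (shift (-stepVec s) ω')) = Q.rnDeriv P ω' := by
      rw [hmap]; exact h0
    exact (ae_map_iff (measurable_shift x).aemeasurable
      (measurableSet_eq_fun hGm hfm)).mp h0'
  filter_upwards [h1] with ω hω
  rw [← hω]
  refine Finset.sum_congr rfl fun s _ => ?_
  have e1 : shift (-stepVec s) (shift x ω) = shift (x - stepVec s) ω := by
    rw [shift_shift, ← sub_eq_add_neg]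
  have e2 : (shift x ω) (-stepVec s) = ω (x - stepVec s) := by
    rw [shift_apply, ← sub_eq_add_neg]
  rw [e1, e2]

end AllX




/-- Harmonicity of the Radon–Nikodym derivative `f = dQ/dP` of the
invariant equivalent measure: `f(σ_x ω) = Σ_y P_ω^y(X_n = x) f(σ_y ω)`. -/
theorem statement17 (d : ℕ) (hd : 1 ≤ d)
    (P : Measure (Env d)) [IsProbabilityMeasure P]
    (Pq : Env d → Site d → Measure (Path d)) (hPq : IsQuenchedFamily Pq)
    (hIID : IsIID P)
    (Q : Measure (Env d)) (hQ : IsProbabilityMeasure Q) (hQinv : InvariantPOV Q)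
    (hQP : Q ≪ P) (hPQ : P ≪ Q) :
    ∀ᵐ ω ∂P, ∀ (n : ℕ) (x : Site d),
      Q.rnDeriv P (shift x ω) =
        ∑' y : Site d, Pq ω y {p : Path d | p n = x} * Q.rnDeriv P (shift y ω) := by
  classical
  haveI := hQ
  filter_upwards [onestep_all (P := P) (Q := Q) hIID hQinv hQP] with ω hω
  have key : ∀ x : Site d,
      (∑' z : Site d, envP ω z (x - z) * Q.rnDeriv P (shift z ω))
        = Q.rnDeriv P (shift x ω) := by
    intro x
    have h1 : ∀ z : Site d, envP ω z (x - z) * Q.rnDeriv P (shift z ω)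
        = ∑ s : StepIdx d,
            (if x - z = stepVec s then ENNReal.ofReal ((ω z).1 s) else 0)
              * Q.rnDeriv P (shift z ω) := by
      intro z; rw [envP, Finset.sum_mul]
    rw [tsum_congr h1, Summable.tsum_finsetSum (fun s _ => ENNReal.summable), ← hω x]
    refine Finset.sum_congr rfl fun s _ => ?_
    rw [tsum_eq_single (x - stepVec s) ?_]
    · rw [if_pos (by rw [sub_sub_cancel])]
    · intro z hz
      rw [if_neg, zero_mul]
      intro hc
      exact hz (by rw [← sub_sub_cancel x z, hc])
  intro n
  induction n with
  | zero =>
    intro x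
    have h0 : ∀ y : Site d, Pq ω y {p : Path d | p 0 = x} = if x = y then 1 else 0 :=
      fun y => quenched_zero (hPq.1 ω y) x
    rw [tsum_congr fun y => by rw [h0 y]]
    rw [tsum_eq_single x fun y hy => by
      rw [if_neg fun h => hy h.symm, zero_mul]]
    rw [if_pos rfl, one_mul]
  | succ n ih =>
    intro x
    have hq : ∀ y : Site d, Pq ω y {p : Path d | p (n + 1) = x}
        = ∑' z : Site d, Pq ω y {p : Path d | p n = z} * envP ω z (x - z) :=
      fun y => quenched_succ (fun m => hPq.1 ω y) n x
    calc Q.rnDeriv P (shift x ω)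
        = ∑' z : Site d, envP ω z (x - z) * Q.rnDeriv P (shift z ω) := (key x).symm
      _ = ∑' z : Site d, envP ω z (x - z)
            * ∑' y : Site d, Pq ω y {p : Path d | p n = z} * Q.rnDeriv P (shift y ω) :=
          tsum_congr fun z => by rw [← ih z]
      _ = ∑' z : Site d, ∑' y : Site d, envP ω z (x - z)
            * (Pq ω y {p : Path d | p n = z} * Q.rnDeriv P (shift y ω)) :=
          tsum_congr fun z => ENNReal.tsum_mul_left.symm
      _ = ∑' y : Site d, ∑' z : Site d, envP ω z (x - z)
            * (Pq ω y {p : Path d | p n = z} * Q.rnDeriv P (shift y ω)) := ENNReal.tsum_comm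
      _ = ∑' y : Site d, Pq ω y {p : Path d | p (n + 1) = x} * Q.rnDeriv P (shift y ω) := by
          refine tsum_congr fun y => ?_
          rw [hq y, ← ENNReal.tsum_mul_right]
          exact tsum_congr fun z => by ring

end RWRE
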